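/- Let γ ∈ {−8, 0}. There exists a constant C > 0 (depending only on γ) such that |G(x,t)| ≤ C (1+|t|)^{−1/4} for all x ∈ ℤ and all t ∈ ℝ. -/

import Mathlib

open MeasureTheory

/-- The fundamental solution of the discrete fourth-order Schrödinger equation
`i∂ₜu + Δ²u − γΔu = 0` on the lattice `ℤ`. -/
noncomputable def G1 (γ : ℝ) (x : ℤ) (t : ℝ) : ℂ :=
  (2 * Real.pi)⁻¹ * ∫ ξ in (-Real.pi)..Real.pi,
    Complex.exp (Complex.I *
      (((x : ℝ) * ξ + ((2 - 2 * Real.cos ξ) ^ 2 + γ * (2 - 2 * Real.cos ξ)) * t : ℝ) : ℂ))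

set_option maxHeartbeats 1000000
open MeasureTheory Set Complex

lemma my_integral_conj (f : ℝ → ℂ) (a b : ℝ) :
    ∫ x in a..b, (starRingEnd ℂ) (f x) = (starRingEnd ℂ) (∫ x in a..b, f x) := by
  simp only [intervalIntegral, ← integral_conj, map_sub]

lemma norm_exp_I_real (r : ℝ) : ‖Complex.exp (Complex.I * r)‖ = 1 := by
  exact Complex.norm_exp_I_mul_ofReal r

lemma hasDerivAt_cinv {f : ℝ → ℂ} {f' : ℂ} {x : ℝ} (hf : HasDerivAt f f' x) (h0 : f x ≠ 0) :
    HasDerivAt (fun y => (f y)⁻¹) (-f' / f x ^ 2) x := by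
  have h1 := (hasDerivAt_inv h0).comp x hf
  have h2 : (fun y => (f y)⁻¹) = (Inv.inv ∘ f) := rfl
  rw [h2]
  refine h1.congr_deriv ?_
  ring

lemma vdc1 {a b lam : ℝ} (hab : a ≤ b) (hlam : 0 < lam) (φ ψ χ : ℝ → ℝ)
    (hφ : ∀ ξ, HasDerivAt φ (ψ ξ) ξ) (hψ : ∀ ξ, HasDerivAt ψ (χ ξ) ξ)
    (hχc : Continuous χ)
    (hlow : ∀ ξ ∈ Icc a b, lam ≤ |ψ ξ|)
    (hsign : (∀ ξ ∈ Icc a b, 0 ≤ χ ξ) ∨ (∀ ξ ∈ Icc a b, χ ξ ≤ 0)) :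
    ‖∫ ξ in a..b, Complex.exp (Complex.I * (φ ξ : ℂ))‖ ≤ 4 / lam := by
  have hψc : Continuous ψ := continuous_iff_continuousAt.2 fun ξ => (hψ ξ).continuousAt
  have hφc : Continuous φ := continuous_iff_continuousAt.2 fun ξ => (hφ ξ).continuousAt
  have huIcc : uIcc a b = Icc a b := uIcc_of_le hab
  have hne : ∀ ξ ∈ Icc a b, ψ ξ ≠ 0 := by
    intro ξ hξ h0
    have := hlow ξ hξ; rw [h0] at this; simp at this; linarith
  set u : ℝ → ℂ := fun ξ => Complex.exp (Complex.I * (φ ξ : ℂ)) with hu_def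
  have hu : ∀ ξ, HasDerivAt u (Complex.I * (ψ ξ) * u ξ) ξ := by
    intro ξ
    have h1 : HasDerivAt (fun ξ : ℝ => Complex.I * (φ ξ : ℂ)) (Complex.I * (ψ ξ)) ξ :=
      ((hφ ξ).ofReal_comp).const_mul Complex.I
    simpa [mul_comm] using h1.cexp
  have huc : Continuous u := by
    continuity
  have hnu : ∀ ξ, ‖u ξ‖ = 1 := fun ξ => norm_exp_I_real _
  set v : ℝ → ℂ := fun ξ => (Complex.I * (ψ ξ))⁻¹ with hv_def
  have hIψne : ∀ ξ ∈ Icc a b, (Complex.I * (ψ ξ) : ℂ) ≠ 0 := by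
    intro ξ hξ
    simp [Complex.I_ne_zero, Complex.ofReal_eq_zero, hne ξ hξ]
  have hv : ∀ ξ ∈ Icc a b, HasDerivAt v (-(Complex.I * χ ξ) / (Complex.I * ψ ξ) ^ 2) ξ := by
    intro ξ hξ
    have h1 : HasDerivAt (fun ξ : ℝ => Complex.I * (ψ ξ : ℂ)) (Complex.I * (χ ξ)) ξ :=
      ((hψ ξ).ofReal_comp).const_mul Complex.I
    exact hasDerivAt_cinv h1 (hIψne ξ hξ)
  set g : ℝ → ℂ := fun ξ => Complex.I * u ξ * ((χ ξ / (ψ ξ) ^ 2 : ℝ) : ℂ) with hg_def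
  have hH : ∀ ξ ∈ uIcc a b, HasDerivAt (fun ξ => u ξ * v ξ) (u ξ + g ξ) ξ := by
    rw [huIcc]
    intro ξ hξ
    have hd := (hu ξ).mul (hv ξ hξ)
    refine hd.congr_deriv ?_
    have h2 : (Complex.I * (ψ ξ) : ℂ) ≠ 0 := hIψne ξ hξ
    have h3 : ((ψ ξ : ℂ)) ≠ 0 := Complex.ofReal_ne_zero.2 (hne ξ hξ)
    simp only [hg_def, hv_def]
    push_cast
    field_simp
    ring_nf
    simp only [pow_succ, pow_zero, one_mul, Complex.I_sq, Complex.inv_I]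
    field_simp
    ring_nf
  -- integrability
  have hgcont : ContinuousOn g (Icc a b) := by
    apply ContinuousOn.mul
    · exact (continuous_const.mul huc).continuousOn
    · apply Complex.continuous_ofReal.comp_continuousOn
      exact ContinuousOn.div hχc.continuousOn (hψc.pow 2).continuousOn
        (fun ξ hξ => pow_ne_zero 2 (hne ξ hξ))
  have hint_u : IntervalIntegrable u volume a b := huc.intervalIntegrable a b
  have hint_g : IntervalIntegrable g volume a b := by
    apply ContinuousOn.intervalIntegrable
    rw [huIcc]; exact hgcont
  have hftc : ∫ ξ in a..b, (u ξ + g ξ) = u b * v b - u a * v a :=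
    intervalIntegral.integral_eq_sub_of_hasDerivAt hH (hint_u.add hint_g)
  have hsplit : ∫ ξ in a..b, (u ξ + g ξ) = (∫ ξ in a..b, u ξ) + ∫ ξ in a..b, g ξ :=
    intervalIntegral.integral_add hint_u hint_g
  have heq : ∫ ξ in a..b, u ξ = (u b * v b - u a * v a) - ∫ ξ in a..b, g ξ := by
    rw [← hftc, hsplit]; ring
  -- bound boundary terms
  have hbdry : ∀ ξ ∈ Icc a b, ‖u ξ * v ξ‖ ≤ 1 / lam := by
    intro ξ hξ
    rw [norm_mul, hnu ξ, one_mul, hv_def]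
    simp only [norm_inv, norm_mul, Complex.norm_I, one_mul, Complex.norm_real, Real.norm_eq_abs]
    rw [one_div]
    exact inv_anti₀ hlam (hlow ξ hξ)
  -- bound on the correction integral
  have hGder : ∀ ξ ∈ uIcc a b, HasDerivAt (fun ξ => -(ψ ξ)⁻¹) (χ ξ / ψ ξ ^ 2) ξ := by
    rw [huIcc]
    intro ξ hξ
    have h1 := ((hψ ξ).inv (hne ξ hξ)).neg
    refine h1.congr_deriv ?_
    ring
  have hq_cont : ContinuousOn (fun ξ => χ ξ / ψ ξ ^ 2) (Icc a b) :=
    ContinuousOn.div hχc.continuousOn (hψc.pow 2).continuousOn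
      (fun ξ hξ => pow_ne_zero 2 (hne ξ hξ))
  have hint_q : IntervalIntegrable (fun ξ => χ ξ / ψ ξ ^ 2) volume a b := by
    apply ContinuousOn.intervalIntegrable; rw [huIcc]; exact hq_cont
  have hftc2 : ∫ ξ in a..b, χ ξ / ψ ξ ^ 2 = (ψ a)⁻¹ - (ψ b)⁻¹ := by
    rw [intervalIntegral.integral_eq_sub_of_hasDerivAt hGder hint_q]
    ring
  have hmemab : a ∈ Icc a b := ⟨le_refl a, hab⟩
  have hmemb : b ∈ Icc a b := ⟨hab, le_refl b⟩
  have habs : |(ψ a)⁻¹ - (ψ b)⁻¹| ≤ 2 / lam := by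
    have h1 : |(ψ a)⁻¹| ≤ 1 / lam := by
      rw [abs_inv, one_div]; exact inv_anti₀ hlam (hlow a hmemab)
    have h2 : |(ψ b)⁻¹| ≤ 1 / lam := by
      rw [abs_inv, one_div]; exact inv_anti₀ hlam (hlow b hmemb)
    calc |(ψ a)⁻¹ - (ψ b)⁻¹| ≤ |(ψ a)⁻¹| + |(ψ b)⁻¹| := abs_sub _ _
      _ ≤ 1/lam + 1/lam := add_le_add h1 h2
      _ = 2/lam := by ring
  have hgnorm : ∀ ξ, ‖g ξ‖ = |χ ξ / ψ ξ ^ 2| := by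
    intro ξ
    simp only [hg_def, norm_mul, Complex.norm_I, hnu ξ, one_mul, Complex.norm_real,
      Real.norm_eq_abs]
  have hint_m : ∫ ξ in a..b, ‖g ξ‖ ≤ 2 / lam := by
    rcases hsign with hpos | hneg
    · have : ∀ ξ ∈ uIcc a b, ‖g ξ‖ = χ ξ / ψ ξ ^ 2 := by
        rw [huIcc]; intro ξ hξ
        rw [hgnorm ξ, _root_.abs_of_nonneg (div_nonneg (hpos ξ hξ) (sq_nonneg _))]
      rw [intervalIntegral.integral_congr this, hftc2]
      calc (ψ a)⁻¹ - (ψ b)⁻¹ ≤ |(ψ a)⁻¹ - (ψ b)⁻¹| := le_abs_self _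
        _ ≤ 2/lam := habs
    · have : ∀ ξ ∈ uIcc a b, ‖g ξ‖ = -(χ ξ / ψ ξ ^ 2) := by
        rw [huIcc]; intro ξ hξ
        rw [hgnorm ξ, _root_.abs_of_nonpos (div_nonpos_of_nonpos_of_nonneg (hneg ξ hξ) (sq_nonneg _))]
      rw [intervalIntegral.integral_congr this, intervalIntegral.integral_neg, hftc2]
      calc -((ψ a)⁻¹ - (ψ b)⁻¹) ≤ |(ψ a)⁻¹ - (ψ b)⁻¹| := neg_le_abs _
        _ ≤ 2/lam := habs
  have hgbd : ‖∫ ξ in a..b, g ξ‖ ≤ 2 / lam :=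
    le_trans (intervalIntegral.norm_integral_le_integral_norm hab) hint_m
  rw [show (fun ξ => Complex.exp (Complex.I * (φ ξ : ℂ))) = u from rfl] at *
  calc ‖∫ ξ in a..b, u ξ‖ = ‖(u b * v b - u a * v a) - ∫ ξ in a..b, g ξ‖ := by rw [heq]
    _ ≤ ‖u b * v b - u a * v a‖ + ‖∫ ξ in a..b, g ξ‖ := norm_sub_le _ _
    _ ≤ (‖u b * v b‖ + ‖u a * v a‖) + ‖∫ ξ in a..b, g ξ‖ := by
        gcongr
        exact norm_sub_le _ _
    _ ≤ (1/lam + 1/lam) + 2/lam :=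
        add_le_add (add_le_add (hbdry b hmemb) (hbdry a hmemab)) hgbd
    _ = 4/lam := by ring

lemma step {a b mu r C : ℝ} (hab : a ≤ b) (hmu : 0 < mu) (hr : 0 < r) (hC : 0 ≤ C)
    (F : ℝ → ℂ) (hF : Continuous F) (hF1 : ∀ ξ, ‖F ξ‖ ≤ 1)
    (ψ χ : ℝ → ℝ) (hψd : ∀ ξ, HasDerivAt ψ (χ ξ) ξ)
    (hχ : ∀ ξ ∈ Icc a b, mu ≤ χ ξ)
    (Hlow : ∀ a' b', a ≤ a' → a' ≤ b' → b' ≤ b →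
      (∀ ξ ∈ Icc a' b', r ≤ |ψ ξ|) → ‖∫ ξ in a'..b', F ξ‖ ≤ C) :
    ‖∫ ξ in a..b, F ξ‖ ≤ 2 * C + 2 * r / mu := by
  have hψc : Continuous ψ := continuous_iff_continuousAt.2 fun ξ => (hψd ξ).continuousAt
  -- growth estimate
  have key : ∀ ξ ∈ Icc a b, ∀ η ∈ Icc a b, ξ ≤ η → mu * (η - ξ) ≤ ψ η - ψ ξ := by
    intro ξ hξ η hη hle
    have hmono : MonotoneOn (fun x => ψ x - mu * x) (Icc a b) := by
      apply monotoneOn_of_deriv_nonneg (convex_Icc a b)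
      · exact (hψc.sub (continuous_const.mul continuous_id)).continuousOn
      · intro x hx
        exact ((hψd x).sub ((hasDerivAt_id x).const_mul mu)).differentiableAt.differentiableWithinAt
      · intro x hx
        rw [interior_Icc] at hx
        have hd : HasDerivAt (fun x => ψ x - mu * x) (χ x - mu) x := by
          exact ((hψd x).sub ((hasDerivAt_id x).const_mul mu)).congr_deriv (by ring)
        rw [hd.deriv]
        have := hχ x (Ioo_subset_Icc_self hx)
        linarith
    have h9 : ψ ξ - mu * ξ ≤ ψ η - mu * η := hmono hξ hη hle
    linarith
  have hmono : MonotoneOn ψ (Icc a b) := by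
    intro ξ hξ η hη hle
    have := key ξ hξ η hη hle
    nlinarith [mul_nonneg hmu.le (sub_nonneg.2 hle)]
  -- split points
  set S0 : Set ℝ := {ξ | ξ ∈ Icc a b ∧ ψ ξ ≤ -r} with hS0
  set S1 : Set ℝ := {ξ | ξ ∈ Icc a b ∧ r ≤ ψ ξ} with hS1
  have hS0sub : S0 ⊆ Icc a b := fun ξ hξ => hξ.1
  have hS1sub : S1 ⊆ Icc a b := fun ξ hξ => hξ.1
  have hS0closed : IsClosed S0 := by
    have : S0 = Icc a b ∩ ψ ⁻¹' (Iic (-r)) := by ext ξ; simp [hS0, and_comm]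
    rw [this]; exact isClosed_Icc.inter (isClosed_Iic.preimage hψc)
  have hS1closed : IsClosed S1 := by
    have : S1 = Icc a b ∩ ψ ⁻¹' (Ici r) := by ext ξ; simp [hS1, and_comm]
    rw [this]; exact isClosed_Icc.inter (isClosed_Ici.preimage hψc)
  set c0 : ℝ := sSup (insert a S0) with hc0
  set c1 : ℝ := sInf (insert b S1) with hc1
  have hbddS0 : BddAbove (insert a S0) := by
    apply BddAbove.insert
    exact (bddAbove_Icc).mono hS0sub
  have hbddS1 : BddBelow (insert b S1) := by
    apply BddBelow.insert
    exact (bddBelow_Icc).mono hS1sub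
  have hac0 : a ≤ c0 := le_csSup hbddS0 (mem_insert a S0)
  have hc0b : c0 ≤ b := csSup_le (insert_nonempty _ _)
    (by rintro x (rfl | hx); exact hab; exact (hS0sub hx).2)
  have hc1b : c1 ≤ b := csInf_le hbddS1 (mem_insert b S1)
  have hac1 : a ≤ c1 := le_csInf (insert_nonempty _ _)
    (by rintro x (rfl | hx); exact hab; exact (hS1sub hx).1)
  have hS0le : ∀ ξ ∈ S0, ∀ η ∈ S1, ξ ≤ η := by
    intro ξ hξ η hη
    by_contra h
    push_neg at h
    have := key η (hS1sub hη) ξ (hS0sub hξ) h.le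
    have h1 : ψ ξ ≤ -r := hξ.2
    have h2 : r ≤ ψ η := hη.2
    nlinarith [mul_nonneg hmu.le (sub_nonneg.2 h.le)]
  have hc01 : c0 ≤ c1 := by
    apply csSup_le (insert_nonempty _ _)
    rintro x (rfl | hx)
    · exact hac1
    · apply le_csInf (insert_nonempty _ _)
      rintro y (rfl | hy)
      · exact (hS0sub hx).2
      · exact hS0le x hx y hy
  -- elements above c0 are not in S0
  have hnotS0 : ∀ ξ ∈ Icc a b, c0 < ξ → -r < ψ ξ := by
    intro ξ hξ hlt
    by_contra h
    push_neg at h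
    have : ξ ∈ S0 := ⟨hξ, h⟩
    have : ξ ≤ c0 := le_csSup hbddS0 (mem_insert_of_mem _ this)
    linarith
  have hnotS1 : ∀ ξ ∈ Icc a b, ξ < c1 → ψ ξ < r := by
    intro ξ hξ hlt
    by_contra h
    push_neg at h
    have : ξ ∈ S1 := ⟨hξ, h⟩
    have : c1 ≤ ξ := csInf_le hbddS1 (mem_insert_of_mem _ this)
    linarith
  -- middle interval length
  have hmid : c1 - c0 ≤ 2 * r / mu := by
    by_contra h
    push_neg at h
    set e : ℝ := (c1 - c0 - 2 * r / mu) / 4 with he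
    have hrmu : 0 < 2 * r / mu := by positivity
    have he0 : 0 < e := by
      rw [he]; linarith
    set ξ : ℝ := c0 + e with hξdef
    set η : ℝ := c1 - e with hηdef
    have hξmem : ξ ∈ Icc a b := by
      rw [hξdef]; constructor
      · linarith
      · linarith
    have hηmem : η ∈ Icc a b := by
      rw [hηdef]; constructor
      · linarith
      · linarith
    have hle : ξ ≤ η := by
      rw [hξdef, hηdef]
      have : 2 * r / mu > 0 := by positivity
      linarith
    have h1 := key ξ hξmem η hηmem hle
    have h2 : -r < ψ ξ := hnotS0 ξ hξmem (by rw [hξdef]; linarith)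
    have h3 : ψ η < r := hnotS1 η hηmem (by rw [hηdef]; linarith)
    have h4 : mu * (η - ξ) < 2 * r := by linarith
    have h5 : η - ξ = (c1 - c0) / 2 + r / mu := by
      rw [hξdef, hηdef, he]; field_simp; ring
    rw [h5] at h4
    have h6 : mu * ((c1 - c0) / 2 + r / mu) = mu * (c1 - c0) / 2 + r := by
      field_simp
    rw [h6] at h4
    have h7 : 2 * r / mu < c1 - c0 := h
    have h8 : 2 * r < mu * (c1 - c0) := by
      rw [div_lt_iff₀ hmu] at h7; linarith [h7]
    linarith
  -- side bounds
  have hside0 : ‖∫ ξ in a..c0, F ξ‖ ≤ C := by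
    rcases eq_or_lt_of_le hac0 with heq | hlt
    · rw [← heq]; simp [hC]
    · have hS0ne : S0.Nonempty := by
        by_contra hemp
        rw [not_nonempty_iff_eq_empty] at hemp
        rw [hc0, hemp, insert_empty_eq, csSup_singleton] at hlt
        exact lt_irrefl a hlt
      have hc0mem : c0 ∈ S0 := by
        have h1 : sSup S0 ∈ S0 := hS0closed.csSup_mem hS0ne (bddAbove_Icc.mono hS0sub)
        have h2 : c0 = sSup S0 := by
          rw [hc0, csSup_insert (bddAbove_Icc.mono hS0sub) hS0ne]
          exact sup_eq_right.2 ((hS0sub h1).1)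
        rw [h2]; exact h1
      apply Hlow a c0 le_rfl hac0 hc0b
      intro ξ hξ
      have hξab : ξ ∈ Icc a b := ⟨hξ.1, le_trans hξ.2 hc0b⟩
      have : ψ ξ ≤ ψ c0 := hmono hξab (hS0sub hc0mem) hξ.2
      have : ψ ξ ≤ -r := le_trans this hc0mem.2
      rw [le_abs]
      right; linarith
  have hside1 : ‖∫ ξ in c1..b, F ξ‖ ≤ C := by
    rcases eq_or_lt_of_le hc1b with heq | hlt
    · rw [heq]; simp [hC]
    · have hS1ne : S1.Nonempty := by
        by_contra hemp
        rw [not_nonempty_iff_eq_empty] at hemp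
        rw [hc1, hemp, insert_empty_eq, csInf_singleton] at hlt
        exact lt_irrefl b hlt
      have hc1mem : c1 ∈ S1 := by
        have h1 : sInf S1 ∈ S1 := hS1closed.csInf_mem hS1ne (bddBelow_Icc.mono hS1sub)
        have h2 : c1 = sInf S1 := by
          rw [hc1, csInf_insert (bddBelow_Icc.mono hS1sub) hS1ne]
          exact inf_eq_right.2 ((hS1sub h1).2)
        rw [h2]; exact h1
      apply Hlow c1 b hac1 hc1b le_rfl
      intro ξ hξ
      have hξab : ξ ∈ Icc a b := ⟨le_trans hac1 hξ.1, hξ.2⟩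
      have : ψ c1 ≤ ψ ξ := hmono (hS1sub hc1mem) hξab hξ.1
      have : r ≤ ψ ξ := le_trans hc1mem.2 this
      rw [le_abs]; left; exact this
  have hmidbd : ‖∫ ξ in c0..c1, F ξ‖ ≤ 2 * r / mu := by
    have h1 : ‖∫ ξ in c0..c1, F ξ‖ ≤ 1 * |c1 - c0| :=
      intervalIntegral.norm_integral_le_of_norm_le_const (fun ξ _ => hF1 ξ)
    rw [one_mul, _root_.abs_of_nonneg (by linarith : (0:ℝ) ≤ c1 - c0)] at h1
    linarith
  have hi1 : IntervalIntegrable F volume a c0 := hF.intervalIntegrable _ _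
  have hi2 : IntervalIntegrable F volume c0 c1 := hF.intervalIntegrable _ _
  have hi3 : IntervalIntegrable F volume c1 b := hF.intervalIntegrable _ _
  have hsplit : ∫ ξ in a..b, F ξ =
      (∫ ξ in a..c0, F ξ) + (∫ ξ in c0..c1, F ξ) + ∫ ξ in c1..b, F ξ := by
    rw [intervalIntegral.integral_add_adjacent_intervals hi1 hi2,
      intervalIntegral.integral_add_adjacent_intervals (hi1.trans hi2) hi3]
  rw [hsplit]
  calc ‖(∫ ξ in a..c0, F ξ) + (∫ ξ in c0..c1, F ξ) + ∫ ξ in c1..b, F ξ‖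
      ≤ ‖(∫ ξ in a..c0, F ξ) + (∫ ξ in c0..c1, F ξ)‖ + ‖∫ ξ in c1..b, F ξ‖ := norm_add_le _ _
    _ ≤ (‖∫ ξ in a..c0, F ξ‖ + ‖∫ ξ in c0..c1, F ξ‖) + ‖∫ ξ in c1..b, F ξ‖ := by
        gcongr; exact norm_add_le _ _
    _ ≤ (C + 2 * r / mu) + C := add_le_add (add_le_add hside0 hmidbd) hside1
    _ = 2 * C + 2 * r / mu := by ring

lemma sign_const {a b m : ℝ} (hm : 0 < m) {χ : ℝ → ℝ} (hc : Continuous χ)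
    (h : ∀ ξ ∈ Icc a b, m ≤ |χ ξ|) (hab : a ≤ b) :
    (∀ ξ ∈ Icc a b, m ≤ χ ξ) ∨ (∀ ξ ∈ Icc a b, χ ξ ≤ -m) := by
  have hmem : a ∈ Icc a b := ⟨le_rfl, hab⟩
  rcases le_abs.1 (h a hmem) with hpos | hneg
  · left
    intro ξ hξ
    rcases le_abs.1 (h ξ hξ) with h1 | h1
    · exact h1
    · exfalso
      have hζ : (0:ℝ) ∈ uIcc (χ a) (χ ξ) := by
        rw [mem_uIcc]
        right; constructor <;> linarith
      have := intermediate_value_uIcc (a := a) (b := ξ)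
        (hc.continuousOn (s := uIcc a ξ))
      obtain ⟨ζ, hζ1, hζ2⟩ := this hζ
      have hζicc : ζ ∈ Icc a b := by
        have : uIcc a ξ ⊆ Icc a b := by
          rw [uIcc_of_le hξ.1]
          exact Icc_subset_Icc le_rfl hξ.2
        exact this hζ1
      have := h ζ hζicc
      rw [hζ2, _root_.abs_zero] at this
      linarith
  · right
    intro ξ hξ
    rcases le_abs.1 (h ξ hξ) with h1 | h1
    · exfalso
      have hζ : (0:ℝ) ∈ uIcc (χ a) (χ ξ) := by
        rw [mem_uIcc]
        left; constructor <;> linarith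
      obtain ⟨ζ, hζ1, hζ2⟩ := intermediate_value_uIcc (a := a) (b := ξ)
        (hc.continuousOn (s := uIcc a ξ)) hζ
      have hζicc : ζ ∈ Icc a b := by
        have : uIcc a ξ ⊆ Icc a b := by
          rw [uIcc_of_le hξ.1]
          exact Icc_subset_Icc le_rfl hξ.2
        exact this hζ1
      have := h ζ hζicc
      rw [hζ2, _root_.abs_zero] at this
      linarith
    · linarith

lemma norm_int_neg_phase (φ : ℝ → ℝ) (a b : ℝ) :
    ‖∫ ξ in a..b, Complex.exp (Complex.I * ((-φ ξ : ℝ) : ℂ))‖ =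
      ‖∫ ξ in a..b, Complex.exp (Complex.I * ((φ ξ : ℝ) : ℂ))‖ := by
  have h : ∀ ξ : ℝ, Complex.exp (Complex.I * ((-φ ξ : ℝ) : ℂ)) =
      (starRingEnd ℂ) (Complex.exp (Complex.I * ((φ ξ : ℝ) : ℂ))) := by
    intro ξ
    rw [← Complex.exp_conj]
    congr 1
    simp [Complex.conj_ofReal]
    try ring
  simp_rw [h, my_integral_conj]
  simp

lemma vdc2 {a b s : ℝ} (hab : a ≤ b) (hs : 0 < s) (φ ψ χ : ℝ → ℝ)
    (hφ : ∀ ξ, HasDerivAt φ (ψ ξ) ξ) (hψ : ∀ ξ, HasDerivAt ψ (χ ξ) ξ)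
    (hχc : Continuous χ)
    (hlow : ∀ ξ ∈ Icc a b, s ^ 2 ≤ |χ ξ|) :
    ‖∫ ξ in a..b, Complex.exp (Complex.I * (φ ξ : ℂ))‖ ≤ 10 / s := by
  have hψc : Continuous ψ := continuous_iff_continuousAt.2 fun ξ => (hψ ξ).continuousAt
  have hφc : Continuous φ := continuous_iff_continuousAt.2 fun ξ => (hφ ξ).continuousAt
  have hs2 : 0 < s ^ 2 := by positivity
  -- main case χ ≥ s² on Icc a b
  have main : ∀ φ' ψ' χ' : ℝ → ℝ, (∀ ξ, HasDerivAt φ' (ψ' ξ) ξ) →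
      (∀ ξ, HasDerivAt ψ' (χ' ξ) ξ) → Continuous χ' →
      (∀ ξ ∈ Icc a b, s ^ 2 ≤ χ' ξ) →
      ‖∫ ξ in a..b, Complex.exp (Complex.I * (φ' ξ : ℂ))‖ ≤ 10 / s := by
    intro φ' ψ' χ' hφ' hψ' hχ'c hpos
    have hφ'c : Continuous φ' := continuous_iff_continuousAt.2 fun ξ => (hφ' ξ).continuousAt
    have hstep := step (a := a) (b := b) (mu := s ^ 2) (r := s) (C := 4 / s) hab hs2 hs
      (by positivity)
      (fun ξ => Complex.exp (Complex.I * (φ' ξ : ℂ)))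
      (by continuity)
      (fun ξ => le_of_eq (norm_exp_I_real _))
      ψ' χ' hψ' hpos
      (by
        intro a' b' ha' hab' hb' hlow'
        exact vdc1 hab' hs φ' ψ' χ' hφ' hψ' hχ'c hlow'
          (Or.inl fun ξ hξ => le_trans hs2.le
            (hpos ξ ⟨le_trans ha' hξ.1, le_trans hξ.2 hb'⟩)))
    calc ‖∫ ξ in a..b, Complex.exp (Complex.I * (φ' ξ : ℂ))‖
        ≤ 2 * (4 / s) + 2 * s / s ^ 2 := hstep
      _ = 10 / s := by field_simp; ring
  rcases sign_const hs2 hχc hlow hab with hpos | hneg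
  · exact main φ ψ χ hφ hψ hχc hpos
  · have h1 := main (fun ξ => -φ ξ) (fun ξ => -ψ ξ) (fun ξ => -χ ξ)
      (fun ξ => (hφ ξ).neg) (fun ξ => (hψ ξ).neg) hχc.neg
      (fun ξ hξ => by simpa using neg_le_neg (hneg ξ hξ))
    rw [norm_int_neg_phase φ a b] at h1
    exact h1

lemma vdc3 {a b s : ℝ} (hab : a ≤ b) (hs : 0 < s) (φ ψ χ χ3 : ℝ → ℝ)
    (hφ : ∀ ξ, HasDerivAt φ (ψ ξ) ξ) (hψ : ∀ ξ, HasDerivAt ψ (χ ξ) ξ)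
    (hχ : ∀ ξ, HasDerivAt χ (χ3 ξ) ξ) (hχ3c : Continuous χ3)
    (hlow : ∀ ξ ∈ Icc a b, s ^ 3 ≤ |χ3 ξ|) :
    ‖∫ ξ in a..b, Complex.exp (Complex.I * (φ ξ : ℂ))‖ ≤ 22 / s := by
  have hχc : Continuous χ := continuous_iff_continuousAt.2 fun ξ => (hχ ξ).continuousAt
  have hs3 : 0 < s ^ 3 := by positivity
  have main : ∀ φ' ψ' χ' χ3' : ℝ → ℝ, (∀ ξ, HasDerivAt φ' (ψ' ξ) ξ) →
      (∀ ξ, HasDerivAt ψ' (χ' ξ) ξ) → (∀ ξ, HasDerivAt χ' (χ3' ξ) ξ) → Continuous χ3' →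
      (∀ ξ ∈ Icc a b, s ^ 3 ≤ χ3' ξ) →
      ‖∫ ξ in a..b, Complex.exp (Complex.I * (φ' ξ : ℂ))‖ ≤ 22 / s := by
    intro φ' ψ' χ' χ3' hφ' hψ' hχ' hχ3'c hpos
    have hφ'c : Continuous φ' := continuous_iff_continuousAt.2 fun ξ => (hφ' ξ).continuousAt
    have hχ'c : Continuous χ' := continuous_iff_continuousAt.2 fun ξ => (hχ' ξ).continuousAt
    have hstep := step (a := a) (b := b) (mu := s ^ 3) (r := s ^ 2) (C := 10 / s) hab hs3
      (by positivity) (by positivity)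
      (fun ξ => Complex.exp (Complex.I * (φ' ξ : ℂ)))
      (by continuity)
      (fun ξ => le_of_eq (norm_exp_I_real _))
      χ' χ3' hχ' hpos
      (by
        intro a' b' ha' hab' hb' hlow'
        exact vdc2 hab' hs φ' ψ' χ' hφ' hψ' hχ'c hlow')
    calc ‖∫ ξ in a..b, Complex.exp (Complex.I * (φ' ξ : ℂ))‖
        ≤ 2 * (10 / s) + 2 * s ^ 2 / s ^ 3 := hstep
      _ = 22 / s := by field_simp; ring
  rcases sign_const hs3 hχ3c hlow hab with hpos | hneg
  · exact main φ ψ χ χ3 hφ hψ hχ hχ3c hpos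
  · have h1 := main (fun ξ => -φ ξ) (fun ξ => -ψ ξ) (fun ξ => -χ ξ) (fun ξ => -χ3 ξ)
      (fun ξ => (hφ ξ).neg) (fun ξ => (hψ ξ).neg) (fun ξ => (hχ ξ).neg) hχ3c.neg
      (fun ξ hξ => by simpa using neg_le_neg (hneg ξ hξ))
    rw [norm_int_neg_phase φ a b] at h1
    exact h1

lemma vdc4 {a b s : ℝ} (hab : a ≤ b) (hs : 0 < s) (φ ψ χ χ3 χ4 : ℝ → ℝ)
    (hφ : ∀ ξ, HasDerivAt φ (ψ ξ) ξ) (hψ : ∀ ξ, HasDerivAt ψ (χ ξ) ξ)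
    (hχ : ∀ ξ, HasDerivAt χ (χ3 ξ) ξ) (hχ3 : ∀ ξ, HasDerivAt χ3 (χ4 ξ) ξ)
    (hχ4c : Continuous χ4)
    (hlow : ∀ ξ ∈ Icc a b, s ^ 4 ≤ |χ4 ξ|) :
    ‖∫ ξ in a..b, Complex.exp (Complex.I * (φ ξ : ℂ))‖ ≤ 46 / s := by
  have hs4 : 0 < s ^ 4 := by positivity
  have main : ∀ φ' ψ' χ' χ3' χ4' : ℝ → ℝ, (∀ ξ, HasDerivAt φ' (ψ' ξ) ξ) →
      (∀ ξ, HasDerivAt ψ' (χ' ξ) ξ) → (∀ ξ, HasDerivAt χ' (χ3' ξ) ξ) →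
      (∀ ξ, HasDerivAt χ3' (χ4' ξ) ξ) → Continuous χ4' →
      (∀ ξ ∈ Icc a b, s ^ 4 ≤ χ4' ξ) →
      ‖∫ ξ in a..b, Complex.exp (Complex.I * (φ' ξ : ℂ))‖ ≤ 46 / s := by
    intro φ' ψ' χ' χ3' χ4' hφ' hψ' hχ' hχ3' hχ4'c hpos
    have hφ'c : Continuous φ' := continuous_iff_continuousAt.2 fun ξ => (hφ' ξ).continuousAt
    have hχ3'c : Continuous χ3' := continuous_iff_continuousAt.2 fun ξ => (hχ3' ξ).continuousAt
    have hstep := step (a := a) (b := b) (mu := s ^ 4) (r := s ^ 3) (C := 22 / s) hab hs4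
      (by positivity) (by positivity)
      (fun ξ => Complex.exp (Complex.I * (φ' ξ : ℂ)))
      (by continuity)
      (fun ξ => le_of_eq (norm_exp_I_real _))
      χ3' χ4' hχ3' hpos
      (by
        intro a' b' ha' hab' hb' hlow'
        exact vdc3 hab' hs φ' ψ' χ' χ3' hφ' hψ' hχ' hχ3'c hlow')
    calc ‖∫ ξ in a..b, Complex.exp (Complex.I * (φ' ξ : ℂ))‖
        ≤ 2 * (22 / s) + 2 * s ^ 3 / s ^ 4 := hstep
      _ = 46 / s := by field_simp; ring
  rcases sign_const hs4 hχ4c hlow hab with hpos | hneg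
  · exact main φ ψ χ χ3 χ4 hφ hψ hχ hχ3 hχ4c hpos
  · have h1 := main (fun ξ => -φ ξ) (fun ξ => -ψ ξ) (fun ξ => -χ ξ) (fun ξ => -χ3 ξ)
      (fun ξ => -χ4 ξ)
      (fun ξ => (hφ ξ).neg) (fun ξ => (hψ ξ).neg) (fun ξ => (hχ ξ).neg)
      (fun ξ => (hχ3 ξ).neg) hχ4c.neg
      (fun ξ hξ => by simpa using neg_le_neg (hneg ξ hξ))
    rw [norm_int_neg_phase φ a b] at h1
    exact h1

noncomputable def dw0 (γ x t : ℝ) : ℝ → ℝ := fun ξ =>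
  x * ξ + ((2 - 2 * Real.cos ξ) ^ 2 + γ * (2 - 2 * Real.cos ξ)) * t
noncomputable def dw1 (γ x t : ℝ) : ℝ → ℝ := fun ξ =>
  x + ((2 * (2 - 2 * Real.cos ξ) + γ) * (2 * Real.sin ξ)) * t
noncomputable def dw2 (γ t : ℝ) : ℝ → ℝ := fun ξ =>
  (8 * Real.sin ξ ^ 2 + (2 * (2 - 2 * Real.cos ξ) + γ) * (2 * Real.cos ξ)) * t
noncomputable def dw3 (γ t : ℝ) : ℝ → ℝ := fun ξ =>
  (24 * Real.sin ξ * Real.cos ξ - (2 * (2 - 2 * Real.cos ξ) + γ) * (2 * Real.sin ξ)) * t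
noncomputable def dw4 (γ t : ℝ) : ℝ → ℝ := fun ξ =>
  (24 * Real.cos ξ ^ 2 - 32 * Real.sin ξ ^ 2 - (2 * (2 - 2 * Real.cos ξ) + γ) * (2 * Real.cos ξ)) * t

lemma h2cos (ξ : ℝ) : HasDerivAt (fun ξ => 2 - 2 * Real.cos ξ) (2 * Real.sin ξ) ξ := by
  have h := ((Real.hasDerivAt_cos ξ).const_mul (2:ℝ)).const_sub (2:ℝ)
  refine h.congr_deriv ?_; ring

lemma hinner (γ ξ : ℝ) :
    HasDerivAt (fun ξ => 2 * (2 - 2 * Real.cos ξ) + γ) (2 * (2 * Real.sin ξ)) ξ := by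
  exact ((h2cos ξ).const_mul (2:ℝ)).add_const γ

lemma hd0 (γ x t ξ : ℝ) : HasDerivAt (dw0 γ x t) (dw1 γ x t ξ) ξ := by
  have hW : HasDerivAt (fun ξ => (2 - 2 * Real.cos ξ) ^ 2 + γ * (2 - 2 * Real.cos ξ))
      ((2 * (2 - 2 * Real.cos ξ) + γ) * (2 * Real.sin ξ)) ξ := by
    have h := ((h2cos ξ).pow 2).add ((h2cos ξ).const_mul γ)
    refine h.congr_deriv ?_; ring
  have h := ((hasDerivAt_id ξ).const_mul x).add (hW.mul_const t)
  have he : HasDerivAt (dw0 γ x t) (x * 1 + (2 * (2 - 2 * Real.cos ξ) + γ) * (2 * Real.sin ξ) * t) ξ := h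
  convert he using 1
  unfold dw1; ring

lemma hd1 (γ x t ξ : ℝ) : HasDerivAt (dw1 γ x t) (dw2 γ t ξ) ξ := by
  have hs2 : HasDerivAt (fun ξ => 2 * Real.sin ξ) (2 * Real.cos ξ) ξ :=
    (Real.hasDerivAt_sin ξ).const_mul 2
  have h := ((((hinner γ ξ).mul hs2)).mul_const t).const_add x
  have he : HasDerivAt (dw1 γ x t)
    ((2 * (2 * Real.sin ξ) * (2 * Real.sin ξ) + (2 * (2 - 2 * Real.cos ξ) + γ) * (2 * Real.cos ξ)) * t) ξ := h
  convert he using 1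
  unfold dw2; ring

lemma hd2 (γ x t ξ : ℝ) : HasDerivAt (dw2 γ t) (dw3 γ t ξ) ξ := by
  have hc2 : HasDerivAt (fun ξ => 2 * Real.cos ξ) (2 * -Real.sin ξ) ξ :=
    (Real.hasDerivAt_cos ξ).const_mul 2
  have h := ((((Real.hasDerivAt_sin ξ).pow 2).const_mul 8).add
    ((hinner γ ξ).mul hc2)).mul_const t
  refine h.congr_deriv ?_
  unfold dw3
  push_cast
  ring

lemma hd3 (γ x t ξ : ℝ) : HasDerivAt (dw3 γ t) (dw4 γ t ξ) ξ := by
  have hs2 : HasDerivAt (fun ξ => 2 * Real.sin ξ) (2 * Real.cos ξ) ξ :=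
    (Real.hasDerivAt_sin ξ).const_mul 2
  have h := ((((Real.hasDerivAt_sin ξ).mul (Real.hasDerivAt_cos ξ)).const_mul 24).sub
    ((hinner γ ξ).mul hs2)).mul_const t
  refine HasDerivAt.congr_of_eventuallyEq (h.congr_deriv ?_) (Filter.Eventually.of_forall fun y => ?_)
  · unfold dw4; ring
  · unfold dw3; simp only [Pi.sub_apply, Pi.mul_apply]; ring

lemma hd4c (γ t : ℝ) : Continuous (dw4 γ t) := by
  unfold dw4; continuity

lemma piece2 {γ x t a b δ : ℝ} (hab : a ≤ b) (hδ : 0 < δ) (ht : t ≠ 0)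
    (h : ∀ ξ ∈ Icc a b,
      δ ≤ |8 * Real.sin ξ ^ 2 + (2 * (2 - 2 * Real.cos ξ) + γ) * (2 * Real.cos ξ)|) :
    ‖∫ ξ in a..b, Complex.exp (Complex.I * ((dw0 γ x t ξ : ℝ) : ℂ))‖ ≤
      10 / Real.sqrt (δ * |t|) := by
  have htpos : 0 < |t| := abs_pos.2 ht
  have hδt : 0 < δ * |t| := by positivity
  have hs : 0 < Real.sqrt (δ * |t|) := Real.sqrt_pos.2 hδt
  apply vdc2 hab hs (dw0 γ x t) (dw1 γ x t) (dw2 γ t) (hd0 γ x t) (hd1 γ x t)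
  · exact continuous_iff_continuousAt.2 fun ξ => (hd2 γ x t ξ).continuousAt
  · intro ξ hξ
    rw [Real.sq_sqrt hδt.le]
    unfold dw2
    rw [abs_mul]
    calc δ * |t| ≤ |8 * Real.sin ξ ^ 2 + (2 * (2 - 2 * Real.cos ξ) + γ) * (2 * Real.cos ξ)| * |t| := by
          apply mul_le_mul_of_nonneg_right (h ξ hξ) htpos.le
      _ = _ := rfl

lemma piece4 {γ x t a b δ : ℝ} (hab : a ≤ b) (hδ : 0 < δ) (ht : t ≠ 0)
    (h : ∀ ξ ∈ Icc a b,
      δ ≤ |24 * Real.cos ξ ^ 2 - 32 * Real.sin ξ ^ 2 - (2 * (2 - 2 * Real.cos ξ) + γ) * (2 * Real.cos ξ)|) :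
    ‖∫ ξ in a..b, Complex.exp (Complex.I * ((dw0 γ x t ξ : ℝ) : ℂ))‖ ≤
      46 / Real.sqrt (Real.sqrt (δ * |t|)) := by
  have htpos : 0 < |t| := abs_pos.2 ht
  have hδt : 0 < δ * |t| := by positivity
  have hs : 0 < Real.sqrt (Real.sqrt (δ * |t|)) := Real.sqrt_pos.2 (Real.sqrt_pos.2 hδt)
  apply vdc4 hab hs (dw0 γ x t) (dw1 γ x t) (dw2 γ t) (dw3 γ t) (dw4 γ t)
    (hd0 γ x t) (hd1 γ x t) (hd2 γ x t) (hd3 γ x t) (hd4c γ t)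
  intro ξ hξ
  have h4 : Real.sqrt (Real.sqrt (δ * |t|)) ^ 4 = δ * |t| := by
    have h1 : Real.sqrt (Real.sqrt (δ * |t|)) ^ 4 = (Real.sqrt (Real.sqrt (δ * |t|)) ^ 2) ^ 2 := by
      ring
    rw [h1, Real.sq_sqrt (Real.sqrt_nonneg _), Real.sq_sqrt hδt.le]
  rw [h4]
  unfold dw4
  rw [abs_mul]
  exact mul_le_mul_of_nonneg_right (h ξ hξ) htpos.le

lemma norm_four {F : ℝ → ℂ} (hF : Continuous F) {q0 q1 q2 q3 q4 A1 A2 A3 A4 : ℝ}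
    (h1 : ‖∫ ξ in q0..q1, F ξ‖ ≤ A1) (h2 : ‖∫ ξ in q1..q2, F ξ‖ ≤ A2)
    (h3 : ‖∫ ξ in q2..q3, F ξ‖ ≤ A3) (h4 : ‖∫ ξ in q3..q4, F ξ‖ ≤ A4) :
    ‖∫ ξ in q0..q4, F ξ‖ ≤ A1 + A2 + A3 + A4 := by
  have i1 : IntervalIntegrable F volume q0 q1 := hF.intervalIntegrable _ _
  have i2 : IntervalIntegrable F volume q1 q2 := hF.intervalIntegrable _ _
  have i3 : IntervalIntegrable F volume q2 q3 := hF.intervalIntegrable _ _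
  have i4 : IntervalIntegrable F volume q3 q4 := hF.intervalIntegrable _ _
  have e1 : ∫ ξ in q0..q4, F ξ = ((∫ ξ in q0..q1, F ξ) + ∫ ξ in q1..q2, F ξ) +
      ((∫ ξ in q2..q3, F ξ) + ∫ ξ in q3..q4, F ξ) := by
    rw [intervalIntegral.integral_add_adjacent_intervals i1 i2,
      intervalIntegral.integral_add_adjacent_intervals i3 i4,
      intervalIntegral.integral_add_adjacent_intervals (i1.trans i2) (i3.trans i4)]
  rw [e1]
  calc ‖_ + _‖ ≤ ‖(∫ ξ in q0..q1, F ξ) + ∫ ξ in q1..q2, F ξ‖ +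
        ‖(∫ ξ in q2..q3, F ξ) + ∫ ξ in q3..q4, F ξ‖ := norm_add_le _ _
    _ ≤ (‖∫ ξ in q0..q1, F ξ‖ + ‖∫ ξ in q1..q2, F ξ‖) +
        (‖∫ ξ in q2..q3, F ξ‖ + ‖∫ ξ in q3..q4, F ξ‖) :=
          add_le_add (norm_add_le _ _) (norm_add_le _ _)
    _ ≤ (A1 + A2) + (A3 + A4) := add_le_add (add_le_add h1 h2) (add_le_add h3 h4)
    _ = A1 + A2 + A3 + A4 := by ring

lemma cos_range {p q ξ : ℝ} (hp : 0 ≤ p) (hq : q ≤ Real.pi) (hξ : ξ ∈ Icc p q) :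
    Real.cos q ≤ Real.cos ξ ∧ Real.cos ξ ≤ Real.cos p :=
  ⟨Real.cos_le_cos_of_nonneg_of_le_pi (le_trans hp hξ.1) hq hξ.2,
   Real.cos_le_cos_of_nonneg_of_le_pi hp (le_trans hξ.2 hq) hξ.1⟩

lemma dw0cont (γ x t : ℝ) : Continuous fun ξ => Complex.exp (Complex.I * ((dw0 γ x t ξ : ℝ) : ℂ)) := by
  have h : Continuous (dw0 γ x t) :=
    continuous_iff_continuousAt.2 fun ξ => (hd0 γ x t ξ).continuousAt
  exact Complex.continuous_exp.comp (continuous_const.mul (Complex.continuous_ofReal.comp h))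

lemma half (γ : ℝ) (hγ : γ = -8 ∨ γ = 0) (x t : ℝ) (ht : t ≠ 0) :
    ‖∫ ξ in (0:ℝ)..Real.pi, Complex.exp (Complex.I * ((dw0 γ x t ξ : ℝ) : ℂ))‖ ≤
      20 / Real.sqrt ((4/25) * |t|) + 92 / Real.sqrt (Real.sqrt (4 * |t|)) := by
  have hδ2 : (0:ℝ) < 4/25 := by norm_num
  have hδ4 : (0:ℝ) < 4 := by norm_num
  have hpi : (0:ℝ) ≤ Real.pi := Real.pi_nonneg
  rcases hγ with rfl | rfl
  · -- γ = -8
    set p1 := Real.arccos (3/5) with hp1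
    set p2 := Real.arccos (2/5) with hp2
    set p3 := Real.arccos (-(9/10)) with hp3
    have hc1 : Real.cos p1 = 3/5 := Real.cos_arccos (by norm_num) (by norm_num)
    have hc2 : Real.cos p2 = 2/5 := Real.cos_arccos (by norm_num) (by norm_num)
    have hc3 : Real.cos p3 = -(9/10) := Real.cos_arccos (by norm_num) (by norm_num)
    have h0p1 : 0 ≤ p1 := Real.arccos_nonneg _
    have h0p2 : 0 ≤ p2 := Real.arccos_nonneg _
    have h0p3 : 0 ≤ p3 := Real.arccos_nonneg _
    have hp1pi : p1 ≤ Real.pi := Real.arccos_le_pi _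
    have hp2pi : p2 ≤ Real.pi := Real.arccos_le_pi _
    have hp3pi : p3 ≤ Real.pi := Real.arccos_le_pi _
    have h12 : p1 ≤ p2 :=
      (Real.strictAntiOn_arccos (by constructor <;> norm_num) (by constructor <;> norm_num)
        (by norm_num)).le
    have h23 : p2 ≤ p3 :=
      (Real.strictAntiOn_arccos (by constructor <;> norm_num) (by constructor <;> norm_num)
        (by norm_num)).le
    have I1 : ‖∫ ξ in (0:ℝ)..p1, Complex.exp (Complex.I * ((dw0 (-8) x t ξ : ℝ) : ℂ))‖ ≤
        10 / Real.sqrt ((4/25) * |t|) := by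
      apply piece2 h0p1 hδ2 ht
      intro ξ hξ
      obtain ⟨hcl, hcu⟩ := cos_range le_rfl hp1pi hξ
      rw [hc1] at hcl
      rw [Real.cos_zero] at hcu
      rw [le_abs]; right
      nlinarith [Real.sin_sq_add_cos_sq ξ]
    have I2 : ‖∫ ξ in p1..p2, Complex.exp (Complex.I * ((dw0 (-8) x t ξ : ℝ) : ℂ))‖ ≤
        46 / Real.sqrt (Real.sqrt (4 * |t|)) := by
      apply piece4 h12 hδ4 ht
      intro ξ hξ
      obtain ⟨hcl, hcu⟩ := cos_range h0p1 hp2pi hξ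
      rw [hc2] at hcl; rw [hc1] at hcu
      rw [le_abs]; right
      nlinarith [Real.sin_sq_add_cos_sq ξ]
    have I3 : ‖∫ ξ in p2..p3, Complex.exp (Complex.I * ((dw0 (-8) x t ξ : ℝ) : ℂ))‖ ≤
        10 / Real.sqrt ((4/25) * |t|) := by
      apply piece2 h23 hδ2 ht
      intro ξ hξ
      obtain ⟨hcl, hcu⟩ := cos_range h0p2 hp3pi hξ
      rw [hc3] at hcl; rw [hc2] at hcu
      rw [le_abs]; left
      nlinarith [Real.sin_sq_add_cos_sq ξ]
    have I4 : ‖∫ ξ in p3..Real.pi, Complex.exp (Complex.I * ((dw0 (-8) x t ξ : ℝ) : ℂ))‖ ≤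
        46 / Real.sqrt (Real.sqrt (4 * |t|)) := by
      apply piece4 hp3pi hδ4 ht
      intro ξ hξ
      obtain ⟨hcl, hcu⟩ := cos_range h0p3 le_rfl hξ
      rw [hc3] at hcu; rw [Real.cos_pi] at hcl
      rw [le_abs]; left
      nlinarith [Real.sin_sq_add_cos_sq ξ]
    have := norm_four (dw0cont (-8) x t) I1 I2 I3 I4
    calc ‖∫ ξ in (0:ℝ)..Real.pi, Complex.exp (Complex.I * ((dw0 (-8) x t ξ : ℝ) : ℂ))‖
        ≤ 10 / Real.sqrt ((4/25) * |t|) + 46 / Real.sqrt (Real.sqrt (4 * |t|)) +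
          10 / Real.sqrt ((4/25) * |t|) + 46 / Real.sqrt (Real.sqrt (4 * |t|)) := this
      _ = 20 / Real.sqrt ((4/25) * |t|) + 92 / Real.sqrt (Real.sqrt (4 * |t|)) := by ring
  · -- γ = 0
    set p1 := Real.arccos (9/10) with hp1
    set p2 := Real.arccos (-(2/5)) with hp2
    set p3 := Real.arccos (-(3/5)) with hp3
    have hc1 : Real.cos p1 = 9/10 := Real.cos_arccos (by norm_num) (by norm_num)
    have hc2 : Real.cos p2 = -(2/5) := Real.cos_arccos (by norm_num) (by norm_num)
    have hc3 : Real.cos p3 = -(3/5) := Real.cos_arccos (by norm_num) (by norm_num)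
    have h0p1 : 0 ≤ p1 := Real.arccos_nonneg _
    have h0p2 : 0 ≤ p2 := Real.arccos_nonneg _
    have h0p3 : 0 ≤ p3 := Real.arccos_nonneg _
    have hp1pi : p1 ≤ Real.pi := Real.arccos_le_pi _
    have hp2pi : p2 ≤ Real.pi := Real.arccos_le_pi _
    have hp3pi : p3 ≤ Real.pi := Real.arccos_le_pi _
    have h12 : p1 ≤ p2 :=
      (Real.strictAntiOn_arccos (by constructor <;> norm_num) (by constructor <;> norm_num)
        (by norm_num)).le
    have h23 : p2 ≤ p3 :=
      (Real.strictAntiOn_arccos (by constructor <;> norm_num) (by constructor <;> norm_num)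
        (by norm_num)).le
    have I1 : ‖∫ ξ in (0:ℝ)..p1, Complex.exp (Complex.I * ((dw0 0 x t ξ : ℝ) : ℂ))‖ ≤
        46 / Real.sqrt (Real.sqrt (4 * |t|)) := by
      apply piece4 h0p1 hδ4 ht
      intro ξ hξ
      obtain ⟨hcl, hcu⟩ := cos_range le_rfl hp1pi hξ
      rw [hc1] at hcl; rw [Real.cos_zero] at hcu
      rw [le_abs]; left
      nlinarith [Real.sin_sq_add_cos_sq ξ]
    have I2 : ‖∫ ξ in p1..p2, Complex.exp (Complex.I * ((dw0 0 x t ξ : ℝ) : ℂ))‖ ≤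
        10 / Real.sqrt ((4/25) * |t|) := by
      apply piece2 h12 hδ2 ht
      intro ξ hξ
      obtain ⟨hcl, hcu⟩ := cos_range h0p1 hp2pi hξ
      rw [hc2] at hcl; rw [hc1] at hcu
      rw [le_abs]; left
      nlinarith [Real.sin_sq_add_cos_sq ξ]
    have I3 : ‖∫ ξ in p2..p3, Complex.exp (Complex.I * ((dw0 0 x t ξ : ℝ) : ℂ))‖ ≤
        46 / Real.sqrt (Real.sqrt (4 * |t|)) := by
      apply piece4 h23 hδ4 ht
      intro ξ hξ
      obtain ⟨hcl, hcu⟩ := cos_range h0p2 hp3pi hξ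
      rw [hc3] at hcl; rw [hc2] at hcu
      rw [le_abs]; right
      nlinarith [Real.sin_sq_add_cos_sq ξ]
    have I4 : ‖∫ ξ in p3..Real.pi, Complex.exp (Complex.I * ((dw0 0 x t ξ : ℝ) : ℂ))‖ ≤
        10 / Real.sqrt ((4/25) * |t|) := by
      apply piece2 hp3pi hδ2 ht
      intro ξ hξ
      obtain ⟨hcl, hcu⟩ := cos_range h0p3 le_rfl hξ
      rw [hc3] at hcu; rw [Real.cos_pi] at hcl
      rw [le_abs]; right
      nlinarith [Real.sin_sq_add_cos_sq ξ, sq_nonneg (Real.cos ξ + 3/5), sq_nonneg (Real.cos ξ + 1)]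
    have := norm_four (dw0cont 0 x t) I1 I2 I3 I4
    calc ‖∫ ξ in (0:ℝ)..Real.pi, Complex.exp (Complex.I * ((dw0 0 x t ξ : ℝ) : ℂ))‖
        ≤ 46 / Real.sqrt (Real.sqrt (4 * |t|)) + 10 / Real.sqrt ((4/25) * |t|) +
          46 / Real.sqrt (Real.sqrt (4 * |t|)) + 10 / Real.sqrt ((4/25) * |t|) := this
      _ = 20 / Real.sqrt ((4/25) * |t|) + 92 / Real.sqrt (Real.sqrt (4 * |t|)) := by ring

lemma full_bound (γ : ℝ) (hγ : γ = -8 ∨ γ = 0) (x t : ℝ) (ht : t ≠ 0) :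
    ‖∫ ξ in (-Real.pi)..Real.pi, Complex.exp (Complex.I * ((dw0 γ x t ξ : ℝ) : ℂ))‖ ≤
      40 / Real.sqrt ((4/25) * |t|) + 184 / Real.sqrt (Real.sqrt (4 * |t|)) := by
  have hF := dw0cont γ x t
  have hi1 : IntervalIntegrable (fun ξ => Complex.exp (Complex.I * ((dw0 γ x t ξ : ℝ) : ℂ)))
      volume (-Real.pi) 0 := hF.intervalIntegrable _ _
  have hi2 : IntervalIntegrable (fun ξ => Complex.exp (Complex.I * ((dw0 γ x t ξ : ℝ) : ℂ)))
      volume 0 Real.pi := hF.intervalIntegrable _ _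
  have hsplit : ∫ ξ in (-Real.pi)..Real.pi, Complex.exp (Complex.I * ((dw0 γ x t ξ : ℝ) : ℂ)) =
      (∫ ξ in (-Real.pi)..(0:ℝ), Complex.exp (Complex.I * ((dw0 γ x t ξ : ℝ) : ℂ))) +
      ∫ ξ in (0:ℝ)..Real.pi, Complex.exp (Complex.I * ((dw0 γ x t ξ : ℝ) : ℂ)) :=
    (intervalIntegral.integral_add_adjacent_intervals hi1 hi2).symm
  have hrefl : ∫ ξ in (-Real.pi)..(0:ℝ), Complex.exp (Complex.I * ((dw0 γ x t ξ : ℝ) : ℂ)) =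
      ∫ ξ in (0:ℝ)..Real.pi, Complex.exp (Complex.I * ((dw0 γ (-x) t ξ : ℝ) : ℂ)) := by
    have hfun : (fun ξ => Complex.exp (Complex.I * ((dw0 γ (-x) t ξ : ℝ) : ℂ))) =
        (fun ξ => Complex.exp (Complex.I * ((dw0 γ x t (-ξ) : ℝ) : ℂ))) := by
      funext ξ
      have harg : dw0 γ (-x) t ξ = dw0 γ x t (-ξ) := by
        unfold dw0; rw [Real.cos_neg]; ring
      rw [harg]
    rw [hfun, intervalIntegral.integral_comp_neg
      (fun ξ => Complex.exp (Complex.I * ((dw0 γ x t ξ : ℝ) : ℂ)))]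
    norm_num
  rw [hsplit, hrefl]
  have h1 := half γ hγ (-x) t ht
  have h2 := half γ hγ x t ht
  calc ‖(∫ ξ in (0:ℝ)..Real.pi, Complex.exp (Complex.I * ((dw0 γ (-x) t ξ : ℝ) : ℂ))) +
      ∫ ξ in (0:ℝ)..Real.pi, Complex.exp (Complex.I * ((dw0 γ x t ξ : ℝ) : ℂ))‖
      ≤ ‖∫ ξ in (0:ℝ)..Real.pi, Complex.exp (Complex.I * ((dw0 γ (-x) t ξ : ℝ) : ℂ))‖ +
        ‖∫ ξ in (0:ℝ)..Real.pi, Complex.exp (Complex.I * ((dw0 γ x t ξ : ℝ) : ℂ))‖ :=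
          norm_add_le _ _
    _ ≤ (20 / Real.sqrt ((4/25) * |t|) + 92 / Real.sqrt (Real.sqrt (4 * |t|))) +
        (20 / Real.sqrt ((4/25) * |t|) + 92 / Real.sqrt (Real.sqrt (4 * |t|))) :=
          add_le_add h1 h2
    _ = 40 / Real.sqrt ((4/25) * |t|) + 184 / Real.sqrt (Real.sqrt (4 * |t|)) := by ring

lemma sqrt_sqrt_le_sqrt_sqrt {u v : ℝ} (h : u ≤ v) :
    Real.sqrt (Real.sqrt u) ≤ Real.sqrt (Real.sqrt v) :=
  Real.sqrt_le_sqrt (Real.sqrt_le_sqrt h)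

lemma sqrt_sqrt_pos {u : ℝ} (hu : 0 < u) : 0 < Real.sqrt (Real.sqrt u) :=
  Real.sqrt_pos.2 (Real.sqrt_pos.2 hu)

/-- For `γ ∈ {−8, 0}` the fundamental solution on `ℤ` decays like `(1+|t|)^{-1/4}`. -/
theorem stmt0 (γ : ℝ) (hγ : γ = -8 ∨ γ = 0) :
    ∃ C > (0 : ℝ), ∀ (x : ℤ) (t : ℝ),
      ‖G1 γ x t‖ ≤ C * (1 + |t|) ^ (-(1 / 4 : ℝ)) := by
  refine ⟨100, by norm_num, ?_⟩
  intro x t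
  have h1t : (0:ℝ) ≤ 1 + |t| := by positivity
  have h1t' : (0:ℝ) < 1 + |t| := by positivity
  have hqpos : 0 < Real.sqrt (Real.sqrt (1 + |t|)) := sqrt_sqrt_pos h1t'
  have hrw : (1 + |t|) ^ (-(1/4:ℝ)) = (Real.sqrt (Real.sqrt (1 + |t|)))⁻¹ := by
    rw [Real.rpow_neg h1t]
    congr 1
    rw [Real.sqrt_eq_rpow, Real.sqrt_eq_rpow, ← Real.rpow_mul h1t]
    norm_num
  rw [hrw, mul_comm (100:ℝ), ← div_eq_inv_mul]
  -- norm of the prefactor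
  have hpi : (0:ℝ) < Real.pi := Real.pi_pos
  have hGnorm : ‖G1 γ x t‖ = (2 * Real.pi)⁻¹ *
      ‖∫ ξ in (-Real.pi)..Real.pi, Complex.exp (Complex.I * ((dw0 γ (x:ℝ) t ξ : ℝ) : ℂ))‖ := by
    unfold G1
    rw [norm_mul]
    congr 1
    rw [Complex.norm_real, Real.norm_eq_abs, _root_.abs_of_pos (by positivity)]
  by_cases hle : |t| ≤ 1
  · -- trivial bound
    have htriv : ‖∫ ξ in (-Real.pi)..Real.pi,
        Complex.exp (Complex.I * ((dw0 γ (x:ℝ) t ξ : ℝ) : ℂ))‖ ≤ 2 * Real.pi := by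
      have h := intervalIntegral.norm_integral_le_of_norm_le_const
        (C := 1) (f := fun ξ => Complex.exp (Complex.I * ((dw0 γ (x:ℝ) t ξ : ℝ) : ℂ)))
        (a := -Real.pi) (b := Real.pi)
        (fun ξ _ => le_of_eq (norm_exp_I_real _))
      calc ‖∫ ξ in (-Real.pi)..Real.pi, Complex.exp (Complex.I * ((dw0 γ (x:ℝ) t ξ : ℝ) : ℂ))‖
          ≤ 1 * |Real.pi - -Real.pi| := h
        _ = 2 * Real.pi := by
            rw [one_mul, _root_.abs_of_nonneg (by linarith : (0:ℝ) ≤ Real.pi - -Real.pi)]; ring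
    have hG1 : ‖G1 γ x t‖ ≤ 1 := by
      rw [hGnorm]
      calc (2 * Real.pi)⁻¹ * ‖∫ ξ in (-Real.pi)..Real.pi,
            Complex.exp (Complex.I * ((dw0 γ (x:ℝ) t ξ : ℝ) : ℂ))‖
          ≤ (2 * Real.pi)⁻¹ * (2 * Real.pi) := by
            apply mul_le_mul_of_nonneg_left htriv (by positivity)
        _ = 1 := by field_simp
    have hq100 : Real.sqrt (Real.sqrt (1 + |t|)) ≤ 100 := by
      have h16 : (1:ℝ) + |t| ≤ 16 := by linarith [abs_nonneg t]
      calc Real.sqrt (Real.sqrt (1 + |t|)) ≤ Real.sqrt (Real.sqrt 16) :=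
            sqrt_sqrt_le_sqrt_sqrt h16
        _ = 2 := by
            rw [show (16:ℝ) = 4^2 by norm_num, Real.sqrt_sq (by norm_num),
              show (4:ℝ) = 2^2 by norm_num, Real.sqrt_sq (by norm_num)]
        _ ≤ 100 := by norm_num
    calc ‖G1 γ x t‖ ≤ 1 := hG1
      _ ≤ 100 / Real.sqrt (Real.sqrt (1 + |t|)) := by
          rw [le_div_iff₀ hqpos]; linarith
  · push_neg at hle
    have ht : t ≠ 0 := by
      intro h; rw [h, abs_zero] at hle; linarith
    have htpos : (0:ℝ) < |t| := abs_pos.2 ht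
    have hone : (1:ℝ) ≤ |t| := hle.le
    have hsqt : (1:ℝ) ≤ Real.sqrt |t| := Real.one_le_sqrt.2 hone
    have hsqqt : (1:ℝ) ≤ Real.sqrt (Real.sqrt |t|) := Real.one_le_sqrt.2 hsqt
    have hqtpos : 0 < Real.sqrt (Real.sqrt |t|) := by linarith
    have hbd := full_bound γ hγ (x:ℝ) t ht
    -- simplify first term
    have hs1 : Real.sqrt ((4/25) * |t|) = (2/5) * Real.sqrt |t| := by
      rw [Real.sqrt_mul (by norm_num : (0:ℝ) ≤ 4/25),
        show (4/25:ℝ) = (2/5)^2 by norm_num, Real.sqrt_sq (by norm_num)]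
    have h40 : 40 / Real.sqrt ((4/25) * |t|) ≤ 100 / Real.sqrt (Real.sqrt |t|) := by
      rw [hs1]
      have hss : Real.sqrt (Real.sqrt |t|) ≤ Real.sqrt |t| := by
        calc Real.sqrt (Real.sqrt |t|) ≤ Real.sqrt ((Real.sqrt |t|)^2) :=
              Real.sqrt_le_sqrt (by nlinarith)
          _ = Real.sqrt |t| := Real.sqrt_sq (by linarith)
      rw [div_le_div_iff₀ (by positivity) hqtpos]
      calc 40 * Real.sqrt (Real.sqrt |t|) ≤ 40 * Real.sqrt |t| := by
            apply mul_le_mul_of_nonneg_left hss (by norm_num)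
        _ ≤ 100 * (2/5 * Real.sqrt |t|) := by nlinarith
    have h184 : 184 / Real.sqrt (Real.sqrt (4 * |t|)) ≤ 184 / Real.sqrt (Real.sqrt |t|) := by
      apply div_le_div_of_nonneg_left (by norm_num) hqtpos
      apply sqrt_sqrt_le_sqrt_sqrt
      linarith
    have htotal : ‖∫ ξ in (-Real.pi)..Real.pi,
        Complex.exp (Complex.I * ((dw0 γ (x:ℝ) t ξ : ℝ) : ℂ))‖ ≤
        284 / Real.sqrt (Real.sqrt |t|) := by
      calc ‖∫ ξ in (-Real.pi)..Real.pi, Complex.exp (Complex.I * ((dw0 γ (x:ℝ) t ξ : ℝ) : ℂ))‖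
          ≤ 40 / Real.sqrt ((4/25) * |t|) + 184 / Real.sqrt (Real.sqrt (4 * |t|)) := hbd
        _ ≤ 100 / Real.sqrt (Real.sqrt |t|) + 184 / Real.sqrt (Real.sqrt |t|) :=
            add_le_add h40 h184
        _ = 284 / Real.sqrt (Real.sqrt |t|) := by ring
    have hG1 : ‖G1 γ x t‖ ≤ 48 / Real.sqrt (Real.sqrt |t|) := by
      rw [hGnorm]
      have hpi3 : (3:ℝ) < Real.pi := Real.pi_gt_three
      calc (2 * Real.pi)⁻¹ * ‖∫ ξ in (-Real.pi)..Real.pi,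
            Complex.exp (Complex.I * ((dw0 γ (x:ℝ) t ξ : ℝ) : ℂ))‖
          ≤ (2 * Real.pi)⁻¹ * (284 / Real.sqrt (Real.sqrt |t|)) := by
            apply mul_le_mul_of_nonneg_left htotal (by positivity)
        _ ≤ 48 / Real.sqrt (Real.sqrt |t|) := by
            rw [div_eq_mul_inv, div_eq_mul_inv, ← mul_assoc]
            apply mul_le_mul_of_nonneg_right _ (by positivity)
            rw [inv_mul_eq_div, div_le_iff₀ (by positivity)]
            nlinarith
    calc ‖G1 γ x t‖ ≤ 48 / Real.sqrt (Real.sqrt |t|) := hG1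
      _ ≤ 100 / Real.sqrt (Real.sqrt (1 + |t|)) := by
          rw [div_le_div_iff₀ hqtpos hqpos]
          have h16 : 1 + |t| ≤ 16 * |t| := by linarith
          have hkey : Real.sqrt (Real.sqrt (1 + |t|)) ≤ 2 * Real.sqrt (Real.sqrt |t|) := by
            calc Real.sqrt (Real.sqrt (1 + |t|)) ≤ Real.sqrt (Real.sqrt (16 * |t|)) :=
                  sqrt_sqrt_le_sqrt_sqrt h16
              _ = 2 * Real.sqrt (Real.sqrt |t|) := by
                  rw [Real.sqrt_mul (by norm_num : (0:ℝ) ≤ 16),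
                    show (16:ℝ) = 4^2 by norm_num, Real.sqrt_sq (by norm_num),
                    Real.sqrt_mul (by norm_num : (0:ℝ) ≤ 4),
                    show (4:ℝ) = 2^2 by norm_num, Real.sqrt_sq (by norm_num)]
          nlinarith [Real.sqrt_nonneg (Real.sqrt |t|)]
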